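/- For every integer q ≥ 2 and every δ with 0 ≤ δ ≤ 1 − 1/q, one has α_q(δ) ≥ 1 − h_q(δ) (the asymptotic Gilbert–Varshamov bound). -/
import Mathlib


open Finset

/-- `minDistGE q n d C` : any two distinct codewords of `C ⊆ Q^n` have Hamming
distance at least `d`. -/
def minDistGE (q n d : ℕ) (C : Finset (Fin n → Fin q)) : Prop :=
  ∀ u ∈ C, ∀ v ∈ C, u ≠ v → d ≤ hammingDist u v

/-- `Aq q n d` : maximum cardinality of a `q`-ary code of length `n` with minimum
Hamming distance at least `d`. -/
noncomputable def Aq (q n d : ℕ) : ℕ :=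
  sSup {k : ℕ | ∃ C : Finset (Fin n → Fin q), minDistGE q n d C ∧ C.card = k}

/-- `alphaQ q δ = limsup_{n→∞} (1/n)·log_q A_q(n, ⌈δn⌉)`. -/
noncomputable def alphaQ (q : ℕ) (δ : ℝ) : ℝ :=
  Filter.limsup (fun n : ℕ => Real.logb q (Aq q n ⌈δ * (n : ℝ)⌉₊) / n) Filter.atTop

/-- The `q`-ary entropy function `h_q(x)`. -/
noncomputable def entq (q : ℕ) (x : ℝ) : ℝ :=
  -x * Real.logb q x - (1 - x) * Real.logb q (1 - x) + x * Real.logb q ((q : ℝ) - 1)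

lemma aq_bddAbove (q n d : ℕ) :
    BddAbove {k : ℕ | ∃ C : Finset (Fin n → Fin q), minDistGE q n d C ∧ C.card = k} := by
  refine ⟨q ^ n, fun k hk => ?_⟩
  obtain ⟨C, -, rfl⟩ := hk
  calc C.card ≤ Fintype.card (Fin n → Fin q) := Finset.card_le_univ C
    _ = q ^ n := by simp [Fintype.card_fun]

lemma aq_spec (q n d : ℕ) :
    ∃ C : Finset (Fin n → Fin q), minDistGE q n d C ∧ C.card = Aq q n d := by
  have h0 : (0:ℕ) ∈ {k : ℕ | ∃ C : Finset (Fin n → Fin q), minDistGE q n d C ∧ C.card = k} :=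
    ⟨∅, fun u hu => by simp at hu, by simp⟩
  exact Nat.sSup_mem ⟨0, h0⟩ (aq_bddAbove q n d)

lemma le_aq {q n d : ℕ} (C : Finset (Fin n → Fin q)) (h : minDistGE q n d C) :
    C.card ≤ Aq q n d :=
  le_csSup (aq_bddAbove q n d) ⟨C, h, rfl⟩

lemma aq_le_pow (q n d : ℕ) : Aq q n d ≤ q ^ n := by
  obtain ⟨C, -, hc⟩ := aq_spec q n d
  rw [← hc]
  calc C.card ≤ Fintype.card (Fin n → Fin q) := Finset.card_le_univ C
    _ = q ^ n := by simp [Fintype.card_fun]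

lemma covering {q n d : ℕ} (hd : 1 ≤ d) (C : Finset (Fin n → Fin q)) (hC : minDistGE q n d C)
    (hmax : C.card = Aq q n d) (x : Fin n → Fin q) : ∃ u ∈ C, hammingDist x u < d := by
  by_contra hcon
  push_neg at hcon
  have hx : x ∉ C := fun hx => by
    have := hcon x hx
    simp [hammingDist_self] at this
    omega
  have hins : minDistGE q n d (insert x C) := by
    intro u hu v hv huv
    rcases Finset.mem_insert.1 hu with hux | hu2
    · subst hux
      rcases Finset.mem_insert.1 hv with hvx | hv2
      · exact absurd hvx.symm huv
      · exact hcon v hv2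
    · rcases Finset.mem_insert.1 hv with hvx | hv2
      · subst hvx
        rw [hammingDist_comm]; exact hcon u hu2
      · exact hC u hu2 v hv2 huv
  have := le_aq _ hins
  rw [Finset.card_insert_of_notMem hx, hmax] at this
  omega

lemma ball_card_le {q n : ℕ} (u : Fin n → Fin q) (r : ℕ) :
    (Finset.univ.filter fun x : Fin n → Fin q => hammingDist x u ≤ r).card
      ≤ ∑ i ∈ Finset.range (r+1), n.choose i * (q-1)^i := by
  classical
  set B : Finset (Fin n) → Finset (Fin n → Fin q) :=
    fun s => Fintype.piFinset (fun j => if j ∈ s then Finset.univ.erase (u j) else {u j})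
    with hB
  have hsub : (Finset.univ.filter fun x : Fin n → Fin q => hammingDist x u ≤ r)
      ⊆ (Finset.range (r+1)).biUnion
        (fun i => (Finset.powersetCard i (Finset.univ : Finset (Fin n))).biUnion B) := by
    intro x hx
    rw [Finset.mem_filter] at hx
    refine Finset.mem_biUnion.2 ⟨hammingDist x u, Finset.mem_range.2 (Nat.lt_succ_of_le hx.2), ?_⟩
    refine Finset.mem_biUnion.2 ⟨Finset.univ.filter (fun j => x j ≠ u j), ?_, ?_⟩
    · rw [Finset.mem_powersetCard]
      exact ⟨Finset.subset_univ _, rfl⟩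
    · rw [hB, Fintype.mem_piFinset]
      intro j
      by_cases h : x j = u j <;> simp [h]
  have hcard : ∀ s : Finset (Fin n), (B s).card = (q-1)^s.card := by
    intro s
    rw [hB, Fintype.card_piFinset]
    have h1 : ∀ j : Fin n,
        ((if j ∈ s then Finset.univ.erase (u j) else {u j}) : Finset (Fin q)).card
        = if j ∈ s then q - 1 else 1 := by
      intro j
      by_cases h : j ∈ s <;>
        simp [h, Finset.card_erase_of_mem, Finset.card_univ]
    rw [Finset.prod_congr rfl (fun j _ => h1 j), Finset.prod_ite_mem,
      Finset.univ_inter, Finset.prod_const]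
  calc (Finset.univ.filter fun x : Fin n → Fin q => hammingDist x u ≤ r).card
      ≤ ((Finset.range (r+1)).biUnion
        (fun i => (Finset.powersetCard i (Finset.univ : Finset (Fin n))).biUnion B)).card :=
        Finset.card_le_card hsub
    _ ≤ ∑ i ∈ Finset.range (r+1),
        ((Finset.powersetCard i (Finset.univ : Finset (Fin n))).biUnion B).card :=
        Finset.card_biUnion_le
    _ ≤ ∑ i ∈ Finset.range (r+1), n.choose i * (q-1)^i := by
        refine Finset.sum_le_sum fun i _ => ?_
        calc ((Finset.powersetCard i (Finset.univ : Finset (Fin n))).biUnion B).card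
            ≤ ∑ s ∈ Finset.powersetCard i (Finset.univ : Finset (Fin n)), (B s).card :=
              Finset.card_biUnion_le
          _ = ∑ s ∈ Finset.powersetCard i (Finset.univ : Finset (Fin n)), (q-1)^i := by
              refine Finset.sum_congr rfl fun s hs => ?_
              rw [hcard s, (Finset.mem_powersetCard.1 hs).2]
          _ = n.choose i * (q-1)^i := by
              rw [Finset.sum_const, Finset.card_powersetCard, Finset.card_univ]
              simp [mul_comm]

lemma gv_count {q n d : ℕ} (hd : 1 ≤ d) :
    q ^ n ≤ Aq q n d * ∑ i ∈ Finset.range d, n.choose i * (q-1)^i := by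
  classical
  obtain ⟨C, hC, hcard⟩ := aq_spec q n d
  have hcover : (Finset.univ : Finset (Fin n → Fin q)) ⊆
      C.biUnion (fun u => Finset.univ.filter fun x => hammingDist x u ≤ d - 1) := by
    intro x _
    obtain ⟨u, hu, hlt⟩ := covering hd C hC hcard x
    exact Finset.mem_biUnion.2 ⟨u, hu,
      Finset.mem_filter.2 ⟨Finset.mem_univ _, Nat.le_sub_one_of_lt hlt⟩⟩
  have hrange : d - 1 + 1 = d := Nat.succ_pred_eq_of_pos hd
  calc q ^ n = (Finset.univ : Finset (Fin n → Fin q)).card := by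
        simp [Finset.card_univ]
    _ ≤ (C.biUnion (fun u => Finset.univ.filter fun x => hammingDist x u ≤ d - 1)).card :=
        Finset.card_le_card hcover
    _ ≤ ∑ u ∈ C, (Finset.univ.filter fun x : Fin n → Fin q => hammingDist x u ≤ d - 1).card :=
        Finset.card_biUnion_le
    _ ≤ ∑ _u ∈ C, ∑ i ∈ Finset.range d, n.choose i * (q-1)^i := by
        refine Finset.sum_le_sum fun u _ => ?_
        simpa [hrange] using ball_card_le u (d-1)
    _ = Aq q n d * ∑ i ∈ Finset.range d, n.choose i * (q-1)^i := by
        rw [Finset.sum_const, hcard, smul_eq_mul]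

lemma vol_le_rpow {q n r : ℕ} (hq : 2 ≤ q) {δ : ℝ} (hδ0 : 0 < δ) (hδ1 : δ ≤ 1 - 1/(q:ℝ))
    (hr : (r:ℝ) ≤ δ * n) :
    ((∑ i ∈ Finset.range (r+1), n.choose i * (q-1)^i : ℕ) : ℝ)
      ≤ (q:ℝ) ^ ((n:ℝ) * entq q δ) := by
  have hq1 : (1:ℝ) < q := by exact_mod_cast Nat.lt_of_lt_of_le one_lt_two hq
  have hq0 : (0:ℝ) < q := by linarith
  have hqne1 : (q:ℝ) ≠ 1 := ne_of_gt hq1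
  have hq1' : (0:ℝ) < (q:ℝ) - 1 := by linarith
  have hδlt1 : δ < 1 := by
    have : 0 < 1/(q:ℝ) := by positivity
    linarith
  have h1δ : 0 < 1 - δ := by linarith
  set B : ℝ := δ / ((1-δ) * ((q:ℝ)-1)) with hBdef
  have hB0 : 0 < B := by positivity
  have hB1 : B ≤ 1 := by
    rw [hBdef, div_le_one (by positivity)]
    have h1 : (1:ℝ)/q * ((q:ℝ)-1) ≤ (1-δ) * ((q:ℝ)-1) := by
      apply mul_le_mul_of_nonneg_right _ hq1'.le
      linarith
    have h2 : (1:ℝ)/q * ((q:ℝ)-1) = 1 - 1/q := by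
      field_simp
    linarith
  set K : ℝ := δ ^ (δ*(n:ℝ)) * (1-δ) ^ ((1-δ)*(n:ℝ)) * ((q:ℝ)-1) ^ (-(δ*(n:ℝ))) with hKdef
  have hK0 : 0 < K := by
    rw [hKdef]
    positivity
  -- q ^ (n * entq) = K⁻¹
  have hpow : (q:ℝ) ^ ((n:ℝ) * entq q δ) = K⁻¹ := by
    rw [hKdef]
    have e1 : ∀ (x c : ℝ), 0 < x → (q:ℝ) ^ (c * Real.logb q x) = x ^ c := by
      intro x c hx
      rw [mul_comm, Real.rpow_mul hq0.le, Real.rpow_logb hq0 hqne1 hx]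
    have hexp : (n:ℝ) * entq q δ
        = (-(δ*(n:ℝ))) * Real.logb q δ + ((-((1-δ)*(n:ℝ))) * Real.logb q (1-δ)
          + (δ*(n:ℝ)) * Real.logb q ((q:ℝ)-1)) := by
      unfold entq; ring
    rw [hexp, Real.rpow_add hq0, Real.rpow_add hq0, e1 _ _ hδ0, e1 _ _ h1δ, e1 _ _ hq1']
    rw [Real.rpow_neg hδ0.le, Real.rpow_neg h1δ.le, Real.rpow_neg hq1'.le,
      mul_inv, mul_inv, inv_inv]
    ring
  rw [hpow]
  -- key termwise bound
  have hrn : (r:ℝ) ≤ (n:ℝ) := le_trans hr (by nlinarith)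
  have hrn' : r ≤ n := by exact_mod_cast hrn
  have key : ∀ i ∈ Finset.range (r+1),
      ((n.choose i * (q-1)^i : ℕ) : ℝ) * K ≤ (n.choose i : ℝ) * (δ^i * (1-δ)^(n-i)) := by
    intro i hi
    have hin : i ≤ n := le_trans (Nat.lt_succ_iff.1 (Finset.mem_range.1 hi)) hrn'
    have hiδn : (i:ℝ) ≤ δ * n := le_trans (by exact_mod_cast Nat.lt_succ_iff.1 (Finset.mem_range.1 hi)) hr
    have hcast : ((n.choose i * (q-1)^i : ℕ) : ℝ) = (n.choose i : ℝ) * ((q:ℝ)-1)^i := by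
      push_cast [Nat.cast_sub (le_trans one_le_two hq)]
      ring
    rw [hcast]
    have heq : ((q:ℝ)-1)^i * K = δ^(i:ℝ) * (1-δ)^((n:ℝ)-(i:ℝ)) * B^(δ*(n:ℝ)-(i:ℝ)) := by
      have l1 : (0:ℝ) < ((q:ℝ)-1)^i * K := by positivity
      have l2 : (0:ℝ) < δ^(i:ℝ) * (1-δ)^((n:ℝ)-(i:ℝ)) * B^(δ*(n:ℝ)-(i:ℝ)) := by positivity
      have hlog : Real.log (((q:ℝ)-1)^i * K)
          = Real.log (δ^(i:ℝ) * (1-δ)^((n:ℝ)-(i:ℝ)) * B^(δ*(n:ℝ)-(i:ℝ))) := by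
        rw [hKdef, hBdef]
        simp (disch := positivity) only [Real.log_mul, Real.log_rpow, Real.log_pow,
          Real.log_div]
        ring
      have := congrArg Real.exp hlog
      rwa [Real.exp_log l1, Real.exp_log l2] at this
    calc (n.choose i : ℝ) * ((q:ℝ)-1)^i * K
        = (n.choose i : ℝ) * (δ^(i:ℝ) * (1-δ)^((n:ℝ)-(i:ℝ)) * B^(δ*(n:ℝ)-(i:ℝ))) := by
          rw [mul_assoc, heq]
      _ ≤ (n.choose i : ℝ) * (δ^(i:ℝ) * (1-δ)^((n:ℝ)-(i:ℝ)) * 1) := by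
          apply mul_le_mul_of_nonneg_left _ (by positivity)
          apply mul_le_mul_of_nonneg_left _ (by positivity)
          exact Real.rpow_le_one hB0.le hB1 (by linarith)
      _ = (n.choose i : ℝ) * (δ^i * (1-δ)^(n-i)) := by
          rw [mul_one, Real.rpow_natCast]
          congr 1
          congr 1
          rw [← Real.rpow_natCast (1-δ) (n-i)]
          congr 1
          push_cast [Nat.cast_sub hin]
          ring
  -- sum the bound
  have hsumK : ((∑ i ∈ Finset.range (r+1), n.choose i * (q-1)^i : ℕ) : ℝ) * K ≤ 1 := by
    push_cast
    rw [Finset.sum_mul]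
    calc ∑ i ∈ Finset.range (r+1), ((n.choose i : ℝ) * ((q:ℕ)-1:ℕ)^i) * K
        ≤ ∑ i ∈ Finset.range (r+1), (n.choose i : ℝ) * (δ^i * (1-δ)^(n-i)) := by
          refine Finset.sum_le_sum fun i hi => ?_
          have := key i hi
          push_cast at this ⊢
          convert this using 2
      _ ≤ ∑ i ∈ Finset.range (n+1), (n.choose i : ℝ) * (δ^i * (1-δ)^(n-i)) := by
          apply Finset.sum_le_sum_of_subset_of_nonneg
          · exact Finset.range_subset_range.2 (by omega)
          · intro i _ _
            positivity
      _ = (δ + (1-δ))^n := by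
          rw [add_pow]
          refine Finset.sum_congr rfl fun i _ => by ring
      _ = 1 := by norm_num
  calc ((∑ i ∈ Finset.range (r+1), n.choose i * (q-1)^i : ℕ) : ℝ)
      = ((∑ i ∈ Finset.range (r+1), n.choose i * (q-1)^i : ℕ) : ℝ) * K / K := by
        field_simp
    _ ≤ 1 / K := by
        gcongr
    _ = K⁻¹ := one_div K

/-- The asymptotic Gilbert–Varshamov bound. -/
theorem asymptotic_gilbert_varshamov (q : ℕ) (hq : 2 ≤ q)
    (δ : ℝ) (hδ0 : 0 ≤ δ) (hδ1 : δ ≤ 1 - 1 / (q : ℝ)) :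
    1 - entq q δ ≤ alphaQ q δ := by
  have hq1 : (1:ℝ) < q := by exact_mod_cast Nat.lt_of_lt_of_le one_lt_two hq
  have hq0 : (0:ℝ) < q := by linarith
  have hqne1 : (q:ℝ) ≠ 1 := ne_of_gt hq1
  rw [alphaQ]
  set u : ℕ → ℝ := fun n => Real.logb q (Aq q n ⌈δ * (n : ℝ)⌉₊) / n with hu
  have hbdd : ∀ n, u n ≤ 1 := by
    intro n
    rcases Nat.eq_zero_or_pos n with rfl | hn
    · simp [hu]
    · have h1 : Real.logb q (Aq q n ⌈δ * (n : ℝ)⌉₊) ≤ n := by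
        rcases Nat.eq_zero_or_pos (Aq q n ⌈δ * (n : ℝ)⌉₊) with h | h
        · simp [h]
        · have step1 : Real.logb q (Aq q n ⌈δ * (n : ℝ)⌉₊) ≤ Real.logb q ((q:ℝ)^(n:ℕ)) := by
            apply Real.logb_le_logb_of_le hq1 (by exact_mod_cast h)
            exact_mod_cast aq_le_pow q n _
          have step2 : Real.logb q ((q:ℝ)^(n:ℕ)) = n := by
            rw [← Real.rpow_natCast, Real.logb_rpow hq0 hqne1]
          linarith
      show Real.logb q (Aq q n ⌈δ * (n : ℝ)⌉₊) / n ≤ 1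
      rw [div_le_one (by exact_mod_cast hn)]
      exact h1
  have hev : ∀ n : ℕ, 1 ≤ n → 1 - entq q δ ≤ u n := by
    intro n hn
    have hn0 : (0:ℝ) < n := by exact_mod_cast hn
    rcases eq_or_lt_of_le hδ0 with rfl | hδpos
    · -- δ = 0
      have hent : entq q 0 = 0 := by simp [entq]
      have hA : Aq q n 0 = q ^ n := by
        apply le_antisymm (aq_le_pow q n 0)
        have hmin : minDistGE q n 0 (Finset.univ) := fun a _ b _ _ => Nat.zero_le _
        have := le_aq _ hmin
        simpa [Finset.card_univ, Fintype.card_fun] using this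
      rw [hent, sub_zero]
      show (1:ℝ) ≤ Real.logb q (Aq q n ⌈(0:ℝ) * (n : ℝ)⌉₊) / n
      rw [zero_mul, Nat.ceil_zero, hA]
      rw [le_div_iff₀ hn0]
      push_cast
      rw [← Real.rpow_natCast (q:ℝ) n, Real.logb_rpow hq0 hqne1]
      linarith
    · set d := ⌈δ * (n : ℝ)⌉₊ with hd
      have hd1 : 1 ≤ d := Nat.ceil_pos.2 (by positivity)
      have hrle : ((d-1 : ℕ):ℝ) ≤ δ * n := by
        have h2 : (d-1 : ℕ) < d := by omega
        have h3 : ((d-1:ℕ):ℝ) < δ * n := Nat.lt_ceil.1 (hd ▸ h2)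
        linarith
      have hgv := gv_count (q:=q) (n:=n) (d:=d) hd1
      have hrange : d - 1 + 1 = d := Nat.succ_pred_eq_of_pos hd1
      have hV := vol_le_rpow (n:=n) (r:=d-1) hq hδpos hδ1 hrle
      rw [hrange] at hV
      have hgvR : ((q:ℝ))^(n:ℕ)
          ≤ (Aq q n d : ℝ) * ((∑ i ∈ Finset.range d, n.choose i * (q-1)^i : ℕ) : ℝ) := by
        exact_mod_cast hgv
      have hAqlb : (q:ℝ) ^ ((n:ℝ) * (1 - entq q δ)) ≤ (Aq q n d : ℝ) := by
        have hVpos : (0:ℝ) < (q:ℝ)^((n:ℝ) * entq q δ) := Real.rpow_pos_of_pos hq0 _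
        rw [← Real.rpow_natCast (q:ℝ) n] at hgvR
        have h2 : (q:ℝ) ^ ((n:ℝ)) ≤ (Aq q n d : ℝ) * (q:ℝ)^((n:ℝ) * entq q δ) :=
          le_trans hgvR (mul_le_mul_of_nonneg_left hV (Nat.cast_nonneg _))
        have h3 : (q:ℝ) ^ ((n:ℝ)*(1-entq q δ)) * (q:ℝ)^((n:ℝ) * entq q δ) = (q:ℝ)^((n:ℝ)) := by
          rw [← Real.rpow_add hq0]; ring_nf
        calc (q:ℝ)^((n:ℝ)*(1-entq q δ)) = (q:ℝ)^((n:ℝ)) / (q:ℝ)^((n:ℝ) * entq q δ) := by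
              rw [← h3]; field_simp
          _ ≤ (Aq q n d : ℝ) := by rw [div_le_iff₀ hVpos]; exact h2
      have hlogb : (n:ℝ) * (1 - entq q δ) ≤ Real.logb q (Aq q n d) := by
        calc (n:ℝ)*(1-entq q δ) = Real.logb q ((q:ℝ)^((n:ℝ)*(1-entq q δ))) :=
              (Real.logb_rpow hq0 hqne1).symm
          _ ≤ Real.logb q (Aq q n d) :=
              Real.logb_le_logb_of_le hq1 (Real.rpow_pos_of_pos hq0 _) hAqlb
      show 1 - entq q δ ≤ Real.logb q (Aq q n ⌈δ * (n : ℝ)⌉₊) / n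
      rw [← hd, le_div_iff₀ hn0]
      calc (1 - entq q δ) * n = (n:ℝ)*(1-entq q δ) := by ring
        _ ≤ _ := hlogb
  have hbound : Filter.IsBoundedUnder (· ≤ ·) Filter.atTop u :=
    ⟨1, Filter.eventually_map.2 (Filter.Eventually.of_forall hbdd)⟩
  exact Filter.le_limsup_of_frequently_le
    ((Filter.eventually_atTop.2 ⟨1, hev⟩).frequently) hbound
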